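/- Let L be a bounded chain and let G be a finite L-colored graph in which every connected component is uniform, and whenever components U(n1, α1, β1) and U(n2, α2, β2) satisfy α1 ⪯ α2 we have n1 ≤ n2 and β1 ⪯ β2. Then G is HH-homogeneous. -/

import Mathlib

/-- An `L`-colored graph on vertex set `V`: vertex colors and symmetric,
irreflexive edge colors (color `⊥` means "no edge"). -/
structure LGraph (L : Type*) [PartialOrder L] [BoundedOrder L] (V : Type*) where
  vcol : V → L
  ecol : V → V → L
  ecol_irrefl : ∀ x, ecol x x = ⊥
  ecol_symm : ∀ x y, ecol x y = ecol y x

variable {L V : Type*} [PartialOrder L] [BoundedOrder L]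

/-- An endomorphism of an `L`-colored graph weakly increases all colors. -/
def LGraph.IsEndo (G : LGraph L V) (f : V → V) : Prop :=
  (∀ x, G.vcol x ≤ G.vcol (f x)) ∧ (∀ x y, G.ecol x y ≤ G.ecol (f x) (f y))

/-- A homomorphism from the finite induced substructure on `S` into `G`. -/
def LGraph.IsPartialHom (G : LGraph L V) (S : Set V) (f : V → V) : Prop :=
  (∀ x ∈ S, G.vcol x ≤ G.vcol (f x)) ∧
  (∀ x ∈ S, ∀ y ∈ S, G.ecol x y ≤ G.ecol (f x) (f y))

/-- `G` is MH-homogeneous: every monomorphism between finite induced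
substructures extends to an endomorphism. -/
def LGraph.MH (G : LGraph L V) : Prop :=
  ∀ S : Set V, S.Finite → ∀ f : V → V, Set.InjOn f S → G.IsPartialHom S f →
    ∃ g : V → V, G.IsEndo g ∧ ∀ x ∈ S, g x = f x

/-- `G` is HH-homogeneous: every homomorphism between finite induced
substructures extends to an endomorphism. -/
def LGraph.HH (G : LGraph L V) : Prop :=
  ∀ S : Set V, S.Finite → ∀ f : V → V, G.IsPartialHom S f →
    ∃ g : V → V, G.IsEndo g ∧ ∀ x ∈ S, g x = f x

/-- Adjacency: edge color is nonzero. -/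
def LGraph.Adj (G : LGraph L V) (x y : V) : Prop := G.ecol x y ≠ ⊥

/-- Two vertices are connected if joined by a path of edges of nonzero color. -/
def LGraph.Conn (G : LGraph L V) (x y : V) : Prop := Relation.ReflTransGen G.Adj x y

/-- `S` is a connected component of `G`. -/
def LGraph.IsComponent (G : LGraph L V) (S : Set V) : Prop :=
  ∃ x : V, S = {y | G.Conn x y}

/-- All vertices of `G` have the same color. -/
def LGraph.VertexUniform (G : LGraph L V) : Prop := ∃ α : L, ∀ x, G.vcol x = α

/-- `G` restricted to `S` is a uniform `L`-colored graph: all vertices of one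
color and all edges between distinct vertices of one fixed nonzero color. -/
def LGraph.UniformOn (G : LGraph L V) (S : Set V) : Prop :=
  (∃ α : L, ∀ x ∈ S, G.vcol x = α) ∧
  (∃ β : L, ⊥ < β ∧ ∀ x ∈ S, ∀ y ∈ S, x ≠ y → G.ecol x y = β)

/-- `G[S]` is isomorphic to `U(n, α, β)`, the connected uniform graph on `n`
vertices, all colored `α`, with all edges colored `β ≻ ⊥`. -/
def LGraph.IsU (G : LGraph L V) (S : Set V) (n : ℕ) (α β : L) : Prop :=
  S.ncard = n ∧ (∀ x ∈ S, G.vcol x = α) ∧ ⊥ < β ∧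
  (∀ x ∈ S, ∀ y ∈ S, x ≠ y → G.ecol x y = β)

/-- `L` is a diamond: all elements other than `⊥` and `⊤` are pairwise
incomparable. -/
def IsDiamond (L : Type*) [PartialOrder L] [BoundedOrder L] : Prop :=
  ∀ a b : L, a ≠ ⊥ → a ≠ ⊤ → b ≠ ⊥ → b ≠ ⊤ → a ≤ b → a = b

/-- An automorphism of an `L`-colored graph. -/
def LGraph.IsAuto (G : LGraph L V) (f : V → V) : Prop :=
  Function.Bijective f ∧ (∀ x, G.vcol (f x) = G.vcol x) ∧
  (∀ x y, G.ecol (f x) (f y) = G.ecol x y)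

/-- `G` is ultrahomogeneous: every isomorphism between finite induced
substructures extends to an automorphism. -/
def LGraph.Ultra (G : LGraph L V) : Prop :=
  ∀ S : Set V, S.Finite → ∀ f : V → V, Set.InjOn f S →
    (∀ x ∈ S, G.vcol (f x) = G.vcol x) →
    (∀ x ∈ S, ∀ y ∈ S, G.ecol (f x) (f y) = G.ecol x y) →
    ∃ g : V → V, G.IsAuto g ∧ ∀ x ∈ S, g x = f x

/-- (3) ⇒ (1) of the Theorem. -/
theorem stmt19 {L V : Type*} [LinearOrder L] [BoundedOrder L] [Finite V]
    (G : LGraph L V)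
    (huniform : ∀ S : Set V, G.IsComponent S → G.UniformOn S)
    (hmono : ∀ (S1 S2 : Set V) (n1 n2 : ℕ) (α1 α2 β1 β2 : L),
        G.IsComponent S1 → G.IsComponent S2 →
        G.IsU S1 n1 α1 β1 → G.IsU S2 n2 α2 β2 →
        α1 ≤ α2 → n1 ≤ n2 ∧ β1 ≤ β2) :
    G.HH := by
  classical
  -- one-step extension of a partial homomorphism
  have step : ∀ (T : Set V) (f : V → V), G.IsPartialHom T f → ∀ a, a ∉ T →
      ∃ v, G.IsPartialHom (insert a T) (Function.update f a v) := by
    intro T f hf a ha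
    set C : Set V := {y | G.Conn a y} with hCdef
    have hcomp : G.IsComponent C := ⟨a, rfl⟩
    obtain ⟨⟨α, hα⟩, ⟨β, hβ0, hβ⟩⟩ := huniform C hcomp
    have haC : a ∈ C := Relation.ReflTransGen.refl
    have hout : ∀ y, y ∉ C → G.ecol a y = ⊥ := by
      intro y hy
      by_contra h
      exact hy (Relation.ReflTransGen.single h)
    have main : ∃ v, G.vcol a ≤ G.vcol v ∧ ∀ y ∈ T, G.ecol a y ≤ G.ecol v (f y) := by
      by_cases hCT : (C ∩ T).Nonempty
      · obtain ⟨x, hxC, hxT⟩ := hCT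
        set D : Set V := {y | G.Conn (f x) y} with hDdef
        have hcompD : G.IsComponent D := ⟨f x, rfl⟩
        obtain ⟨⟨α', hα'⟩, ⟨β', hβ'0, hβ'⟩⟩ := huniform D hcompD
        have hfxD : f x ∈ D := Relation.ReflTransGen.refl
        have hmapD : ∀ y ∈ C ∩ T, f y ∈ D := by
          rintro y ⟨hyC, hyT⟩
          rcases eq_or_ne y x with rfl | hne
          · exact hfxD
          · have h1 : G.ecol x y = β := hβ x hxC y hyC (Ne.symm hne)
            have h2 : β ≤ G.ecol (f x) (f y) := h1 ▸ hf.2 x hxT y hyT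
            exact Relation.ReflTransGen.single
              (fun h => hβ0.ne' (le_bot_iff.mp (h ▸ h2)))
        have hinj : Set.InjOn f (C ∩ T) := by
          intro y hy z hz hfyz
          by_contra hne
          have h1 : G.ecol y z = β := hβ y hy.1 z hz.1 hne
          have h2 : β ≤ G.ecol (f y) (f z) := h1 ▸ hf.2 y hy.2 z hz.2
          rw [hfyz, G.ecol_irrefl] at h2
          exact hβ0.ne' (le_bot_iff.mp h2)
        have hU1 : G.IsU C C.ncard α β := ⟨rfl, hα, hβ0, hβ⟩
        have hU2 : G.IsU D D.ncard α' β' := ⟨rfl, hα', hβ'0, hβ'⟩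
        have hαα' : α ≤ α' := by
          have h := hf.1 x hxT
          rwa [hα x hxC, hα' (f x) hfxD] at h
        obtain ⟨hn, hββ'⟩ :=
          hmono C D C.ncard D.ncard α α' β β' hcomp hcompD hU1 hU2 hαα'
        have hsub : f '' (C ∩ T) ⊆ D := by rintro _ ⟨y, hy, rfl⟩; exact hmapD y hy
        have hss : C ∩ T ⊂ C := by
          refine Set.ssubset_iff_subset_ne.mpr ⟨Set.inter_subset_left, fun h => ?_⟩
          rw [← h] at haC
          exact ha haC.2
        have hlt : (f '' (C ∩ T)).ncard < D.ncard := by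
          rw [Set.ncard_image_of_injOn hinj]
          exact lt_of_lt_of_le (Set.ncard_lt_ncard hss (Set.toFinite _)) hn
        have hv : (D \ f '' (C ∩ T)).Nonempty := by
          rw [Set.nonempty_iff_ne_empty]
          intro h
          rw [Set.diff_eq_empty] at h
          exact absurd (Set.ncard_le_ncard h (Set.toFinite _)) (not_le.mpr hlt)
        obtain ⟨v, hvD, hvim⟩ := hv
        refine ⟨v, ?_, ?_⟩
        · rw [hα a haC, hα' v hvD]; exact hαα'
        · intro y hyT
          by_cases hyC : y ∈ C
          · have hne : a ≠ y := fun h => ha (h ▸ hyT)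
            have hfy : f y ∈ D := hmapD y ⟨hyC, hyT⟩
            have hvne : v ≠ f y := fun h => hvim ⟨y, ⟨hyC, hyT⟩, h.symm⟩
            rw [hβ a haC y hyC hne, hβ' v hvD (f y) hfy hvne]
            exact hββ'
          · rw [hout y hyC]; exact bot_le
      · refine ⟨a, le_refl _, fun y hyT => ?_⟩
        have hyC : y ∉ C := fun h => hCT ⟨y, h, hyT⟩
        rw [hout y hyC]; exact bot_le
    obtain ⟨v, hv1, hv2⟩ := main
    refine ⟨v, ?_, ?_⟩
    · intro z hz
      by_cases hz' : z = a
      · rw [hz', Function.update_self, ← hz']; exact hz' ▸ hv1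
      · have hzT : z ∈ T := (Set.mem_insert_iff.mp hz).resolve_left hz'
        rw [Function.update_of_ne hz']
        exact hf.1 z hzT
    · intro z hz w hw
      by_cases hz' : z = a
      · by_cases hw' : w = a
        · rw [hz', hw', Function.update_self, G.ecol_irrefl, G.ecol_irrefl]
        · have hwT : w ∈ T := (Set.mem_insert_iff.mp hw).resolve_left hw'
          rw [hz', Function.update_self, Function.update_of_ne hw']
          exact hv2 w hwT
      · have hzT : z ∈ T := (Set.mem_insert_iff.mp hz).resolve_left hz'
        rw [Function.update_of_ne hz']
        by_cases hw' : w = a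
        · rw [hw', Function.update_self, G.ecol_symm z a, G.ecol_symm (f z) v]
          exact hv2 z hzT
        · rw [Function.update_of_ne hw']
          exact hf.2 z hzT w ((Set.mem_insert_iff.mp hw).resolve_left hw')
  -- iterate the one-step extension
  have key : ∀ (k : ℕ) (T : Set V) (f : V → V), Tᶜ.ncard = k →
      G.IsPartialHom T f →
      ∃ g, G.IsPartialHom Set.univ g ∧ ∀ x ∈ T, g x = f x := by
    intro k
    induction k with
    | zero =>
      intro T f hT hf
      have hT' : Tᶜ = ∅ := (Set.ncard_eq_zero (Set.toFinite _)).mp hT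
      have : T = Set.univ := by
        rw [← Set.compl_empty_iff]; exact hT'
      exact ⟨f, this ▸ hf, fun x _ => rfl⟩
    | succ k ih =>
      intro T f hT hf
      have hne : Tᶜ.Nonempty := Set.nonempty_of_ncard_ne_zero (by omega)
      obtain ⟨a, ha⟩ := hne
      obtain ⟨v, hv⟩ := step T f hf a ha
      have hcompl : (insert a T)ᶜ = Tᶜ \ {a} := by
        ext y; simp only [Set.mem_compl_iff, Set.mem_insert_iff, Set.mem_diff,
          Set.mem_singleton_iff]; tauto
      have hcard : (insert a T)ᶜ.ncard = k := by
        rw [hcompl, Set.ncard_diff_singleton_of_mem ha, hT]; omega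
      obtain ⟨g, hg, hgf⟩ := ih (insert a T) (Function.update f a v) hcard hv
      refine ⟨g, hg, fun x hx => ?_⟩
      have hxa : x ≠ a := by rintro rfl; exact ha hx
      rw [hgf x (Set.mem_insert_of_mem a hx), Function.update_of_ne hxa]
  intro S hS f hf
  obtain ⟨g, hg, hgf⟩ := key Sᶜ.ncard S f rfl hf
  exact ⟨g, ⟨fun x => hg.1 x trivial, fun x y => hg.2 x trivial y trivial⟩, hgf⟩
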